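/- Let μ be a nonzero positive finite Borel measure on [0,1], let M := max supp μ, and for R > 0 and θ ∈ [−π,π] set Φ(R·e^{iθ}) := ∫₀¹ R^α e^{iαθ} dμ(α). Then for every ε with 0 < ε < 1 there exist c > 0 and R₀ > 0 such that |Φ(R·e^{iθ})| ≥ c·R^{M−ε} for all R ≥ R₀ and all θ ∈ [−π,π]. -/

import Mathlib

open MeasureTheory Complex Set

/-- `PhiP μ R θ = ∫₀¹ R^α e^{iαθ} dμ(α)` (polar form, including boundary values θ = ±π). -/
noncomputable def PhiP (μ : Measure ℝ) (R θ : ℝ) : ℂ :=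
  ∫ α in Set.Icc (0:ℝ) 1, ((R ^ α : ℝ) : ℂ) * Complex.exp ((α * θ : ℝ) * Complex.I) ∂μ

/-- `M` is the largest point of the support of the measure `μ` (supported in `[0,1]`). -/
def IsMaxSupport (μ : Measure ℝ) (M : ℝ) : Prop :=
  M ∈ Set.Icc (0:ℝ) 1 ∧ μ (Set.Ioi M) = 0 ∧ ∀ ε > 0, 0 < μ (Set.Icc (M - ε) M)

set_option maxHeartbeats 1000000 in
theorem stmt_2 (μ : Measure ℝ) [IsFiniteMeasure μ] (hμ : μ ≠ 0)
    (hsupp : μ (Set.Icc (0:ℝ) 1)ᶜ = 0) (M : ℝ) (hM : IsMaxSupport μ M) :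
    ∀ ε : ℝ, 0 < ε → ε < 1 →
      ∃ c > 0, ∃ R₀ > 0, ∀ R ≥ R₀, ∀ θ ∈ Set.Icc (-Real.pi) Real.pi,
        c * R ^ (M - ε) ≤ ‖PhiP μ R θ‖ := by
  intro ε hε hε1
  have hπ := Real.pi_pos
  set δ : ℝ := min ε (1/4) with hδdef
  have hδpos : 0 < δ := lt_min hε (by norm_num)
  have hδε : δ ≤ ε := min_le_left _ _
  have hδ4 : δ ≤ 1/4 := min_le_right _ _
  have hrestrict : μ.restrict (Set.Icc (0:ℝ) 1) = μ := by
    apply Measure.restrict_eq_self_of_ae_mem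
    rw [ae_iff]
    exact hsupp
  have hm'pos0 : 0 < μ (Set.Icc (M - δ/2) M) := hM.2.2 (δ/2) (by positivity)
  set m' : ℝ := (μ (Set.Icc (M - δ/2) M)).toReal with hm'def
  have hm'pos : 0 < m' := ENNReal.toReal_pos hm'pos0.ne' (measure_ne_top μ _)
  set K : ℝ := (μ Set.univ).toReal with hKdef
  have hK0 : 0 ≤ K := ENNReal.toReal_nonneg
  refine ⟨m'/4, by positivity, max 1 ((4*K/m' + 1) ^ (2/δ : ℝ)),
    lt_of_lt_of_le one_pos (le_max_left _ _), ?_⟩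
  intro R hR θ hθ
  have hR1 : (1:ℝ) ≤ R := le_trans (le_max_left _ _) hR
  have hRpos : (0:ℝ) < R := lt_of_lt_of_le one_pos hR1
  set f : ℝ → ℝ := fun α => R ^ α * Real.cos ((α - M) * θ) with hfdef
  have hcont1 : Continuous fun α : ℝ => R ^ α := by
    have h : (fun α : ℝ => R ^ α) = fun α => Real.exp (Real.log R * α) :=
      funext fun α => Real.rpow_def_of_pos hRpos α
    rw [h]
    exact Real.continuous_exp.comp (continuous_const.mul continuous_id)
  have hcontf : Continuous f :=
    hcont1.mul (Real.continuous_cos.comp ((continuous_id.sub continuous_const).mul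
      continuous_const))
  have hIntf : Integrable f μ := by
    rw [← hrestrict]
    exact hcontf.continuousOn.integrableOn_compact isCompact_Icc
  set g : ℝ → ℂ := fun α => ((R ^ α : ℝ) : ℂ) * Complex.exp ((((α - M) * θ : ℝ) : ℂ) * Complex.I)
    with hgdef
  have hcontg : Continuous g := by
    apply (Complex.continuous_ofReal.comp hcont1).mul
    exact Complex.continuous_exp.comp ((Complex.continuous_ofReal.comp
      ((continuous_id.sub continuous_const).mul continuous_const)).mul continuous_const)
  have hIntg : Integrable g μ := by
    rw [← hrestrict]
    exact hcontg.continuousOn.integrableOn_compact isCompact_Icc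
  have hPhi : PhiP μ R θ = ∫ α, ((R ^ α : ℝ) : ℂ) * Complex.exp ((α * θ : ℝ) * Complex.I) ∂μ := by
    unfold PhiP; rw [hrestrict]
  set w : ℂ := Complex.exp ((↑(-(M*θ)) : ℂ) * Complex.I) with hwdef
  have key : w * PhiP μ R θ = ∫ α, g α ∂μ := by
    rw [hPhi, ← integral_const_mul]
    refine integral_congr_ae (Filter.Eventually.of_forall fun α => ?_)
    show w * (((R ^ α : ℝ) : ℂ) * Complex.exp (((α * θ : ℝ) : ℂ) * Complex.I))
        = ((R ^ α : ℝ) : ℂ) * Complex.exp ((((α - M) * θ : ℝ) : ℂ) * Complex.I)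
    have heq : ((((α - M) * θ : ℝ)) : ℂ) * Complex.I
        = (↑(-(M*θ)) : ℂ) * Complex.I + ((α * θ : ℝ) : ℂ) * Complex.I := by
      push_cast; ring
    rw [heq, Complex.exp_add, hwdef]
    ring
  have hre : (w * PhiP μ R θ).re = ∫ α, f α ∂μ := by
    rw [key, ← RCLike.re_to_complex, ← integral_re hIntg]
    refine integral_congr_ae (Filter.Eventually.of_forall fun α => ?_)
    show (((R ^ α : ℝ) : ℂ) * Complex.exp ((((α - M) * θ : ℝ) : ℂ) * Complex.I)).re
        = R ^ α * Real.cos ((α - M) * θ)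
    rw [Complex.re_ofReal_mul, Complex.exp_ofReal_mul_I_re]
  have h1 : ∫ α, f α ∂μ ≤ ‖PhiP μ R θ‖ := by
    rw [← hre]
    calc (w * PhiP μ R θ).re ≤ ‖w * PhiP μ R θ‖ := Complex.re_le_norm _
    _ = ‖PhiP μ R θ‖ := by
        rw [norm_mul, hwdef, Complex.norm_exp_ofReal_mul_I, one_mul]
  have hsplit : ∫ α, f α ∂μ
      = (∫ α in Set.Iio (M - δ), f α ∂μ) + ∫ α in Set.Ici (M - δ), f α ∂μ := by
    rw [← integral_add_compl measurableSet_Iio hIntf, compl_Iio]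
  have hcos : ∀ α ∈ Set.Icc (M - δ) M, (1/2 : ℝ) ≤ Real.cos ((α - M) * θ) := by
    intro α hα
    have habs : |(α - M) * θ| ≤ Real.pi/4 := by
      rw [abs_mul]
      have h1' : |α - M| ≤ δ := abs_le.2 ⟨by linarith [hα.1], by linarith [hα.2]⟩
      have h2' : |θ| ≤ Real.pi := abs_le.2 ⟨hθ.1, hθ.2⟩
      calc |α - M| * |θ| ≤ δ * Real.pi :=
            mul_le_mul h1' h2' (abs_nonneg _) hδpos.le
      _ ≤ (1/4) * Real.pi := by nlinarith
      _ = Real.pi/4 := by ring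
    calc (1/2:ℝ) ≤ Real.cos (Real.pi/4) := by
          rw [Real.cos_pi_div_four]
          nlinarith [Real.sq_sqrt (by norm_num : (0:ℝ) ≤ 2), Real.sqrt_nonneg 2]
    _ ≤ Real.cos |(α - M) * θ| :=
          Real.cos_le_cos_of_nonneg_of_le_pi (abs_nonneg _) (by linarith) habs
    _ = Real.cos ((α - M) * θ) := Real.cos_abs _
  have htail : |∫ α in Set.Iio (M - δ), f α ∂μ| ≤ R ^ (M - δ) * K := by
    have hC : ∀ α ∈ Set.Iio (M - δ), ‖f α‖ ≤ R ^ (M - δ) := by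
      intro α hα
      have h2' : R ^ α ≤ R ^ (M - δ) := Real.rpow_le_rpow_of_exponent_le hR1 (le_of_lt hα)
      have h3' : |Real.cos ((α - M) * θ)| ≤ 1 := Real.abs_cos_le_one _
      calc ‖f α‖ = R ^ α * |Real.cos ((α - M) * θ)| := by
            simp only [hfdef, Real.norm_eq_abs, abs_mul, _root_.abs_of_nonneg (Real.rpow_nonneg hRpos.le α)]
      _ ≤ R ^ α * 1 := by
            exact mul_le_mul_of_nonneg_left h3' (Real.rpow_nonneg hRpos.le α)
      _ ≤ R ^ (M - δ) := by rw [mul_one]; exact h2'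
    calc |∫ α in Set.Iio (M - δ), f α ∂μ| ≤ R ^ (M - δ) * (μ (Set.Iio (M - δ))).toReal :=
          norm_setIntegral_le_of_norm_le_const (measure_lt_top μ _) hC
    _ ≤ R ^ (M - δ) * K := by
          apply mul_le_mul_of_nonneg_left _ (Real.rpow_nonneg hRpos.le _)
          exact ENNReal.toReal_mono (measure_ne_top μ _) (measure_mono (Set.subset_univ _))
  have hI2 : ∫ α in Set.Ici (M - δ), f α ∂μ = ∫ α in Set.Icc (M - δ) M, f α ∂μ := by
    have hae : Set.Ici (M - δ) =ᵐ[μ] Set.Icc (M - δ) M := by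
      rw [MeasureTheory.ae_eq_set]
      constructor
      · apply measure_mono_null _ hM.2.1
        intro x hx
        simp only [Set.mem_diff, Set.mem_Ici, Set.mem_Icc, not_and, Set.mem_Ioi] at *
        exact lt_of_not_ge fun h => hx.2 hx.1 h
      · apply measure_mono_null _ hM.2.1
        intro x hx
        exact absurd hx.1.1 hx.2
    rw [Measure.restrict_congr_set hae]
  have hI3 : ∫ α in Set.Icc (M - δ/2) M, f α ∂μ ≤ ∫ α in Set.Icc (M - δ) M, f α ∂μ := by
    apply setIntegral_mono_set hIntf.integrableOn
    · filter_upwards [ae_restrict_mem measurableSet_Icc] with α hα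
      exact mul_nonneg (Real.rpow_nonneg hRpos.le α)
        (le_trans (by norm_num) (hcos α hα))
    · exact HasSubset.Subset.eventuallyLE (Set.Icc_subset_Icc_left (by linarith))
  have hI4 : R ^ (M - δ/2) * (1/2) * m' ≤ ∫ α in Set.Icc (M - δ/2) M, f α ∂μ := by
    apply setIntegral_ge_of_const_le_real measurableSet_Icc (measure_ne_top μ _) _
      hIntf.integrableOn
    intro α hα
    have hra : R ^ (M - δ/2) ≤ R ^ α := Real.rpow_le_rpow_of_exponent_le hR1 hα.1
    have hc : (1/2 : ℝ) ≤ Real.cos ((α - M) * θ) :=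
      hcos α ⟨by linarith [hα.1], hα.2⟩
    have := mul_le_mul hra hc (by norm_num) (Real.rpow_nonneg hRpos.le α)
    linarith [this]
  have hbase : (0:ℝ) < 4*K/m' + 1 := by positivity
  have hRδ : 4*K/m' + 1 ≤ R ^ (δ/2 : ℝ) := by
    calc 4*K/m' + 1 = ((4*K/m' + 1) ^ (2/δ : ℝ)) ^ (δ/2 : ℝ) := by
          rw [← Real.rpow_mul hbase.le]
          rw [show (2/δ)*(δ/2) = (1:ℝ) by field_simp, Real.rpow_one]
    _ ≤ R ^ (δ/2 : ℝ) :=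
          Real.rpow_le_rpow (Real.rpow_nonneg hbase.le _)
            (le_trans (le_max_right _ _) hR) (by positivity)
  have hprod : R ^ (M - δ) * R ^ (δ/2 : ℝ) = R ^ (M - δ/2) := by
    rw [← Real.rpow_add hRpos]; ring_nf
  have hKbound : R ^ (M - δ) * K ≤ R ^ (M - δ/2) * (1/4) * m' := by
    have h4 : 4*K ≤ m' * R ^ (δ/2 : ℝ) := by
      have : 4*K/m' ≤ R ^ (δ/2 : ℝ) := by linarith
      rw [div_le_iff₀ hm'pos] at this
      linarith [this]
    have hA : (0:ℝ) ≤ R ^ (M - δ) := Real.rpow_nonneg hRpos.le _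
    nlinarith [mul_le_mul_of_nonneg_left h4 hA]
  have hRε : R ^ (M - ε) ≤ R ^ (M - δ/2) :=
    Real.rpow_le_rpow_of_exponent_le hR1 (by linarith)
  have hfin : m'/4 * R ^ (M - ε) ≤ R ^ (M - δ/2) * (1/4) * m' := by
    nlinarith [hRε, hm'pos.le, Real.rpow_nonneg hRpos.le (M - ε)]
  have htail' : -(R ^ (M - δ) * K) ≤ ∫ α in Set.Iio (M - δ), f α ∂μ := by
    have := neg_abs_le (∫ α in Set.Iio (M - δ), f α ∂μ)
    linarith
  linarith [h1, hsplit, hI2, hI3, hI4, hKbound, hfin, htail']
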